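/- Let X = {a_1,…,a_ℓ} be a finite set of ℓ distinct points and N ≥ 1. Every γ ∈ P_sym(X^N) can be represented uniquely as a convex combination of the measures γ_λ: there exist unique coefficients α_λ ≥ 0, λ ∈ P_{1/N}(X), with Σ_{λ ∈ P_{1/N}(X)} α_λ = 1, such that γ = Σ_{λ ∈ P_{1/N}(X)} α_λ γ_λ. -/

import Mathlib

open Finset

noncomputable def symmetrize (N ℓ : ℕ) (γ : (Fin N → Fin ℓ) → ℝ) : (Fin N → Fin ℓ) → ℝ :=
  fun x => (1 / (Nat.factorial N : ℝ)) * ∑ σ : Equiv.Perm (Fin N), γ (x ∘ σ)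

def IsProbVec {α : Type*} [Fintype α] (p : α → ℝ) : Prop :=
  (∀ x, 0 ≤ p x) ∧ ∑ x, p x = 1

def IsSymmFun (N ℓ : ℕ) (γ : (Fin N → Fin ℓ) → ℝ) : Prop :=
  ∀ (σ : Equiv.Perm (Fin N)) (x : Fin N → Fin ℓ), γ (x ∘ σ) = γ x

def PSym (N ℓ : ℕ) : Set ((Fin N → Fin ℓ) → ℝ) :=
  {γ | IsProbVec γ ∧ IsSymmFun N ℓ γ}

noncomputable def margOf (N ℓ : ℕ) (x : Fin N → Fin ℓ) : Fin ℓ → ℝ :=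
  fun j => ((Finset.univ.filter fun k => x k = j).card : ℝ) / (N : ℝ)

noncomputable def QuantFinset (N ℓ : ℕ) : Finset (Fin ℓ → ℝ) :=
  Finset.image (margOf N ℓ) Finset.univ

noncomputable def gammaLam (N ℓ : ℕ) (lam : Fin ℓ → ℝ) : (Fin N → Fin ℓ) → ℝ :=
  if h : ∃ i : Fin N → Fin ℓ, margOf N ℓ i = lam then
    symmetrize N ℓ (fun x => if x = h.choose then 1 else 0)
  else 0

noncomputable def marg1 (N ℓ : ℕ) [NeZero N] (γ : (Fin N → Fin ℓ) → ℝ) : Fin ℓ → ℝ :=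
  fun j => ∑ x : Fin N → Fin ℓ, if x 0 = j then γ x else 0

noncomputable def marg2 (N ℓ : ℕ) [NeZero N] (γ : (Fin N → Fin ℓ) → ℝ) : Fin ℓ → Fin ℓ → ℝ :=
  fun j k => ∑ x : Fin N → Fin ℓ, if x 0 = j ∧ x 1 = k then γ x else 0

noncomputable def cCoef (N ℓ : ℕ) (c : (Fin N → Fin ℓ) → ℝ) (lam : Fin ℓ → ℝ) : ℝ :=
  ∑ x : Fin N → Fin ℓ, gammaLam N ℓ lam x * c x

lemma margOf_comp_perm (N ℓ : ℕ) (x : Fin N → Fin ℓ) (σ : Equiv.Perm (Fin N)) :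
    margOf N ℓ (x ∘ σ) = margOf N ℓ x := by
  funext j
  unfold margOf
  congr 2
  apply Finset.card_bij' (fun k _ => σ k) (fun k _ => σ.symm k) <;>
    simp [Function.comp]

lemma exists_perm_of_margOf_eq {N ℓ : ℕ} [NeZero N] {x y : Fin N → Fin ℓ}
    (h : margOf N ℓ x = margOf N ℓ y) : ∃ σ : Equiv.Perm (Fin N), y = x ∘ σ := by
  have hN : (N : ℝ) ≠ 0 := Nat.cast_ne_zero.mpr (NeZero.ne N)
  have hcard : ∀ j, (Finset.univ.filter fun k => x k = j).card
      = (Finset.univ.filter fun k => y k = j).card := by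
    intro j
    have h1 := congrFun h j
    unfold margOf at h1
    field_simp at h1
    exact_mod_cast h1
  have hperm : List.Perm (List.ofFn x) (List.ofFn y) := by
    rw [← Multiset.coe_eq_coe, ← Fin.univ_val_map, ← Fin.univ_val_map]
    ext j
    rw [Multiset.count_map, Multiset.count_map]
    have : ∀ z : Fin N → Fin ℓ, Multiset.card (Multiset.filter (fun a => j = z a) Finset.univ.val)
        = (Finset.univ.filter fun k => z k = j).card := by
      intro z
      simp [Finset.card, Finset.filter, eq_comm]
    rw [this, this, hcard]
  have h1 : List.Perm (List.ofFn (x ∘ Tuple.sort x)) (List.ofFn (y ∘ Tuple.sort y)) :=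
    ((Tuple.sort x).ofFn_comp_perm x).trans (hperm.trans ((Tuple.sort y).ofFn_comp_perm y).symm)
  have h2 : x ∘ Tuple.sort x = y ∘ Tuple.sort y := by
    apply List.ofFn_injective
    haveI : IsAntisymm (Fin ℓ) (· ≤ ·) := ⟨fun _ _ => le_antisymm⟩
    refine List.Perm.eq_of_sortedLE ?_ ?_ h1 <;> rw [List.sortedLE_ofFn_iff]
    · exact Tuple.monotone_sort x
    · exact Tuple.monotone_sort y
  refine ⟨(Tuple.sort y).symm.trans (Tuple.sort x), ?_⟩
  funext k
  have := congrFun h2 ((Tuple.sort y).symm k)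
  simpa using this.symm

lemma symmetrize_comp_perm (N ℓ : ℕ) (f : (Fin N → Fin ℓ) → ℝ) (x : Fin N → Fin ℓ)
    (σ : Equiv.Perm (Fin N)) : symmetrize N ℓ f (x ∘ σ) = symmetrize N ℓ f x := by
  unfold symmetrize
  congr 1
  apply Fintype.sum_equiv (Equiv.mulLeft σ)
  intro τ
  congr 1

lemma gammaLam_comp_perm (N ℓ : ℕ) (lam : Fin ℓ → ℝ) (x : Fin N → Fin ℓ)
    (σ : Equiv.Perm (Fin N)) : gammaLam N ℓ lam (x ∘ σ) = gammaLam N ℓ lam x := by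
  unfold gammaLam
  split_ifs with h
  · exact symmetrize_comp_perm N ℓ _ x σ
  · rfl

lemma gammaLam_eq_zero {N ℓ : ℕ} {lam : Fin ℓ → ℝ} {x : Fin N → Fin ℓ}
    (h : margOf N ℓ x ≠ lam) : gammaLam N ℓ lam x = 0 := by
  unfold gammaLam
  split_ifs with hl
  · unfold symmetrize
    have : ∀ σ : Equiv.Perm (Fin N),
        (if x ∘ σ = hl.choose then (1:ℝ) else 0) = 0 := by
      intro σ
      rw [if_neg]
      intro he
      apply h
      rw [← hl.choose_spec, ← he, margOf_comp_perm]
    rw [Finset.sum_congr rfl fun σ _ => this σ]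
    simp
  · rfl

lemma gammaLam_sum {N ℓ : ℕ} {lam : Fin ℓ → ℝ}
    (hlam : ∃ i : Fin N → Fin ℓ, margOf N ℓ i = lam) :
    ∑ x : Fin N → Fin ℓ, gammaLam N ℓ lam x = 1 := by
  unfold gammaLam
  rw [dif_pos hlam]
  unfold symmetrize
  rw [← Finset.mul_sum, Finset.sum_comm]
  have hσ : ∀ σ : Equiv.Perm (Fin N),
      ∑ x : Fin N → Fin ℓ, (if x ∘ σ = hlam.choose then (1:ℝ) else 0) = 1 := by
    intro σ
    have hcond : ∀ x : Fin N → Fin ℓ, (x ∘ ⇑σ = hlam.choose) ↔ (x = hlam.choose ∘ ⇑σ.symm) := by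
      intro x
      constructor
      · intro he
        funext k
        have := congrFun he (σ.symm k)
        simpa using this
      · intro he
        subst he
        funext k
        simp
    rw [Finset.sum_congr rfl fun x _ => if_congr (hcond x) rfl rfl]
    simp
  rw [Finset.sum_congr rfl fun σ _ => hσ σ]
  have : (Nat.factorial N : ℝ) ≠ 0 := Nat.cast_ne_zero.mpr (Nat.factorial_ne_zero N)
  simp [Fintype.card_perm]
  field_simp

lemma sum_filter_gammaLam {N ℓ : ℕ} {lam : Fin ℓ → ℝ}
    (hlam : ∃ i : Fin N → Fin ℓ, margOf N ℓ i = lam) :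
    ∑ x ∈ Finset.univ.filter (fun x : Fin N → Fin ℓ => margOf N ℓ x = lam),
      gammaLam N ℓ lam x = 1 := by
  rw [Finset.sum_filter_of_ne, gammaLam_sum hlam]
  intro x _ hne
  by_contra h
  exact hne (gammaLam_eq_zero h)


/-- Every symmetric probability measure on X^N is a unique convex
combination of the extreme measures γ_λ, λ ∈ P_{1/N}(X). -/
theorem unique_extremal_representation (ℓ N : ℕ) [NeZero N]
    (γ : (Fin N → Fin ℓ) → ℝ) (hγ : γ ∈ PSym N ℓ) :
    ∃! α : (Fin ℓ → ℝ) → ℝ,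
      (∀ lam, 0 ≤ α lam) ∧
      (∀ lam ∉ QuantFinset N ℓ, α lam = 0) ∧
      (∑ lam ∈ QuantFinset N ℓ, α lam = 1) ∧
      ∀ x, γ x = ∑ lam ∈ QuantFinset N ℓ, α lam * gammaLam N ℓ lam x := by
  obtain ⟨⟨hpos, hsum⟩, hsymm⟩ := hγ
  set α : (Fin ℓ → ℝ) → ℝ :=
    fun lam => ∑ x : Fin N → Fin ℓ, if margOf N ℓ x = lam then γ x else 0 with hα
  have hconst : ∀ x y : Fin N → Fin ℓ, margOf N ℓ x = margOf N ℓ y → γ y = γ x := by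
    intro x y h
    obtain ⟨σ, rfl⟩ := exists_perm_of_margOf_eq h
    exact hsymm σ x
  have hmemQ : ∀ x : Fin N → Fin ℓ, margOf N ℓ x ∈ QuantFinset N ℓ := fun x =>
    Finset.mem_image_of_mem _ (Finset.mem_univ x)
  have hwit : ∀ lam ∈ QuantFinset N ℓ, ∃ i : Fin N → Fin ℓ, margOf N ℓ i = lam := by
    intro lam hlam
    simpa [QuantFinset] using hlam
  have hdelta : ∀ lam ∈ QuantFinset N ℓ, ∀ μ ∈ QuantFinset N ℓ,
      ∑ x ∈ Finset.univ.filter (fun x : Fin N → Fin ℓ => margOf N ℓ x = lam),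
        gammaLam N ℓ μ x = if μ = lam then 1 else 0 := by
    intro lam hlam μ hμ
    by_cases h : μ = lam
    · subst h
      rw [if_pos rfl]
      exact sum_filter_gammaLam (hwit μ hμ)
    · rw [if_neg h]
      apply Finset.sum_eq_zero
      intro x hx
      apply gammaLam_eq_zero
      rw [(Finset.mem_filter.mp hx).2]
      exact fun he => h he.symm
  have hαfil : ∀ lam, α lam =
      ∑ x ∈ Finset.univ.filter (fun x : Fin N → Fin ℓ => margOf N ℓ x = lam), γ x := by
    intro lam
    rw [hα, Finset.sum_filter]
  refine ⟨α, ⟨?_, ?_, ?_, ?_⟩, ?_⟩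
  · intro lam
    apply Finset.sum_nonneg
    intro x _
    split_ifs
    · exact hpos x
    · exact le_refl 0
  · intro lam hlam
    apply Finset.sum_eq_zero
    intro x _
    rw [if_neg]
    intro he
    exact hlam (he ▸ hmemQ x)
  · rw [Finset.sum_comm]
    calc ∑ x : Fin N → Fin ℓ, ∑ lam ∈ QuantFinset N ℓ, (if margOf N ℓ x = lam then γ x else 0)
        = ∑ x : Fin N → Fin ℓ, γ x := by
          apply Finset.sum_congr rfl
          intro x _
          rw [Finset.sum_ite_eq (QuantFinset N ℓ) (margOf N ℓ x) (fun _ => γ x),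
            if_pos (hmemQ x)]
      _ = 1 := hsum
  · intro x
    rw [Finset.sum_eq_single (margOf N ℓ x)
      (fun b _ hne => by rw [gammaLam_eq_zero (Ne.symm hne), mul_zero])
      (fun h => absurd (hmemQ x) h)]
    set S := Finset.univ.filter (fun y : Fin N → Fin ℓ => margOf N ℓ y = margOf N ℓ x) with hS
    have hαeq : α (margOf N ℓ x) = (S.card : ℝ) * γ x := by
      rw [hαfil, ← hS,
        Finset.sum_congr rfl (fun y hy => hconst x y ((Finset.mem_filter.mp hy).2).symm),
        Finset.sum_const, nsmul_eq_mul]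
    have hgconst : ∀ y ∈ S, gammaLam N ℓ (margOf N ℓ x) y = gammaLam N ℓ (margOf N ℓ x) x := by
      intro y hy
      obtain ⟨σ, rfl⟩ := exists_perm_of_margOf_eq ((Finset.mem_filter.mp hy).2).symm
      exact gammaLam_comp_perm N ℓ _ x σ
    have hgsum : (S.card : ℝ) * gammaLam N ℓ (margOf N ℓ x) x = 1 := by
      have h1 := sum_filter_gammaLam (N := N) (ℓ := ℓ) ⟨x, rfl⟩
      rw [← hS, Finset.sum_congr rfl hgconst, Finset.sum_const, nsmul_eq_mul] at h1
      exact h1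
    rw [hαeq, mul_comm ((S.card : ℝ)) (γ x), mul_assoc, hgsum, mul_one]
  · rintro β ⟨hb0, hbout, hbsum, hbrep⟩
    funext lam
    by_cases hQ : lam ∈ QuantFinset N ℓ
    · set S := Finset.univ.filter (fun y : Fin N → Fin ℓ => margOf N ℓ y = lam) with hS
      have key : ∑ x ∈ S, γ x = β lam := by
        calc ∑ x ∈ S, γ x
            = ∑ x ∈ S, ∑ μ ∈ QuantFinset N ℓ, β μ * gammaLam N ℓ μ x :=
              Finset.sum_congr rfl fun x _ => hbrep x
          _ = ∑ μ ∈ QuantFinset N ℓ, ∑ x ∈ S, β μ * gammaLam N ℓ μ x := Finset.sum_comm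
          _ = ∑ μ ∈ QuantFinset N ℓ, β μ * ∑ x ∈ S, gammaLam N ℓ μ x := by
              apply Finset.sum_congr rfl
              intro μ _
              rw [Finset.mul_sum]
          _ = β lam := by
              rw [Finset.sum_eq_single lam
                (fun μ hμ hne => by rw [hdelta lam hQ μ hμ, if_neg hne, mul_zero])
                (fun h => absurd hQ h),
                hdelta lam hQ lam hQ, if_pos rfl, mul_one]
      rw [hαfil, ← hS, key]
    · rw [hbout lam hQ]
      symm
      apply Finset.sum_eq_zero
      intro x _
      rw [if_neg]
      intro he
      exact hQ (he ▸ hmemQ x)
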